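/- Assume hypothesis (H1). Then for all 0 ≤ s < t ≤ T, all N ≥ 0, and all x_1, x_2, x_3, x_4 ∈ ℝ^d with |x_i| ≤ N (i = 1,2,3,4), one has |g(s,x_1) − g(s,x_3) − g(t,x_2) + g(t,x_4)| ≤ L_g|x_1 − x_2 − x_3 + x_4| + |x_2 − x_4|·h(s,t)^β + M_N|x_2 − x_4|·(|x_1 − x_2|^δ + |x_3 − x_4|^δ). -/

import Mathlib

open scoped BigOperators
open Set

noncomputable section

/-- Euclidean space `ℝ^n`. -/
abbrev Ed (n : ℕ) : Type := EuclideanSpace ℝ (Fin n)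

section PVarDefs

variable {E F : Type*} [NormedAddCommGroup E] [NormedSpace ℝ E]
  [NormedAddCommGroup F] [NormedSpace ℝ F]

/-- The set of sums `Σ_i ‖x (t (i+1)) - x (t i)‖ ^ p` over all finite partitions
`a = t 0 < t 1 < ⋯ < t n = b` of `[a,b]`. -/
def pVarSums (p : ℝ) (x : ℝ → E) (a b : ℝ) : Set ℝ :=
  { v | ∃ n : ℕ, ∃ t : Fin (n + 1) → ℝ, StrictMono t ∧ t 0 = a ∧ t (Fin.last n) = b ∧
      v = ∑ i : Fin n, ‖x (t i.succ) - x (t i.castSucc)‖ ^ p }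

/-- The `p`-variation seminorm `|||x|||_{p-var,[a,b]}`. -/
def pVar (p : ℝ) (x : ℝ → E) (a b : ℝ) : ℝ :=
  sSup (pVarSums p x a b) ^ (1 / p)

/-- `x` is of finite `p`-variation on `[a,b]`. -/
def FinitePVar (p : ℝ) (x : ℝ → E) (a b : ℝ) : Prop :=
  BddAbove (pVarSums p x a b)

/-- The `p`-variation norm `‖x‖_{p-var,[a,b]} = ‖x a‖ + |||x|||_{p-var,[a,b]}`. -/
def pVarNorm (p : ℝ) (x : ℝ → E) (a b : ℝ) : ℝ :=
  ‖x a‖ + pVar p x a b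

/-- A control function on `[a,b]`: continuous on the simplex, vanishing on the diagonal,
superadditive and nonnegative. -/
def IsControlOn (a b : ℝ) (w : ℝ → ℝ → ℝ) : Prop :=
  ContinuousOn (fun pr : ℝ × ℝ => w pr.1 pr.2) {pr : ℝ × ℝ | a ≤ pr.1 ∧ pr.1 ≤ pr.2 ∧ pr.2 ≤ b} ∧
  (∀ t : ℝ, a ≤ t → t ≤ b → w t t = 0) ∧
  (∀ s t u : ℝ, a ≤ s → s ≤ t → t ≤ u → u ≤ b → w s t + w t u ≤ w s u) ∧
  (∀ s t : ℝ, a ≤ s → s ≤ t → t ≤ b → 0 ≤ w s t)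

/-- A tagged partition `a = t 0 < t 1 < ⋯ < t n = b` of `[a,b]`, with tags
`tag i ∈ [t i, t (i+1)]`. -/
structure TaggedPartition (a b : ℝ) where
  n : ℕ
  t : Fin (n + 1) → ℝ
  tag : Fin n → ℝ
  mono : StrictMono t
  first : t 0 = a
  last : t (Fin.last n) = b
  tag_mem : ∀ i : Fin n, tag i ∈ Set.Icc (t i.castSucc) (t i.succ)

/-- The mesh of a tagged partition. -/
def TaggedPartition.mesh {a b : ℝ} (P : TaggedPartition a b) : ℝ :=
  ⨆ i : Fin P.n, (P.t i.succ - P.t i.castSucc)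

/-- Riemann–Stieltjes sum of `x` against `ω` along a tagged partition. -/
def RSSum (x : ℝ → E →L[ℝ] F) (ω : ℝ → E) {a b : ℝ} (P : TaggedPartition a b) : F :=
  ∑ i : Fin P.n, x (P.tag i) (ω (P.t i.succ) - ω (P.t i.castSucc))

/-- `v` is the Young integral `∫_a^b x dω`: the Riemann–Stieltjes sums converge to `v`
as the mesh tends to `0`. -/
def IsYoungIntegral (x : ℝ → E →L[ℝ] F) (ω : ℝ → E) (a b : ℝ) (v : F) : Prop :=
  ∀ ε : ℝ, 0 < ε → ∃ δ : ℝ, 0 < δ ∧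
    ∀ P : TaggedPartition a b, P.mesh < δ → ‖RSSum x ω P - v‖ < ε

/-- The Young integral `∫_a^b x dω` (an arbitrary value, `0`, if the limit does not exist). -/
def youngIntegral (x : ℝ → E →L[ℝ] F) (ω : ℝ → E) (a b : ℝ) : F :=
  letI := Classical.propDecidable (∃ v, IsYoungIntegral x ω a b v)
  if hv : ∃ v, IsYoungIntegral x ω a b v then hv.choose else 0

end PVarDefs

set_option maxHeartbeats 1000000 in
/-- Lemma `lemma2`(ii): under hypothesis (H1), for `s < t` in `[0,T]` and
`x₁,x₂,x₃,x₄` of norm `≤ N`,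
`‖g(s,x₁) - g(s,x₃) - g(t,x₂) + g(t,x₄)‖ ≤ L_g ‖x₁-x₂-x₃+x₄‖ + ‖x₂-x₄‖ h(s,t)^β
 + M_N ‖x₂-x₄‖ (‖x₁-x₂‖^δ + ‖x₃-x₄‖^δ)`. -/
theorem stmt7 {d m : ℕ} (T : ℝ) (hT : 0 < T)
    (g : ℝ → Ed d → (Ed m →L[ℝ] Ed d))
    (hg : ContinuousOn (fun pr : ℝ × Ed d => g pr.1 pr.2) (Set.Icc 0 T ×ˢ Set.univ))
    (Dg : ℝ → Ed d → (Ed d →L[ℝ] Ed m →L[ℝ] Ed d))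
    (hDg : ∀ t ∈ Set.Icc (0:ℝ) T, ∀ x : Ed d, HasFDerivAt (g t) (Dg t x) x)
    (β δ Lg : ℝ) (hβ0 : 0 < β) (hβ1 : β ≤ 1) (hδ0 : 0 < δ) (hδ1 : δ ≤ 1) (hLg : 0 < Lg)
    (h : ℝ → ℝ → ℝ) (hctrl : IsControlOn 0 T h)
    (MN : ℝ → ℝ) (hMN : ∀ N : ℝ, 0 ≤ N → 0 < MN N)
    (H1i : ∀ t ∈ Set.Icc (0:ℝ) T, ∀ x y : Ed d, ‖g t x - g t y‖ ≤ Lg * ‖x - y‖)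
    (H1ii : ∀ N : ℝ, 0 ≤ N → ∀ t ∈ Set.Icc (0:ℝ) T, ∀ x y : Ed d, ‖x‖ ≤ N → ‖y‖ ≤ N →
      ‖Dg t x - Dg t y‖ ≤ MN N * ‖x - y‖ ^ δ)
    (H1iii : ∀ s t : ℝ, 0 ≤ s → s < t → t ≤ T → ∀ x : Ed d,
      ‖g t x - g s x‖ + ‖Dg t x - Dg s x‖ ≤ h s t ^ β) :
    ∀ s t : ℝ, 0 ≤ s → s < t → t ≤ T → ∀ N : ℝ, 0 ≤ N →
      ∀ x1 x2 x3 x4 : Ed d, ‖x1‖ ≤ N → ‖x2‖ ≤ N → ‖x3‖ ≤ N → ‖x4‖ ≤ N →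
      ‖g s x1 - g s x3 - g t x2 + g t x4‖ ≤
        Lg * ‖x1 - x2 - x3 + x4‖ + ‖x2 - x4‖ * h s t ^ β +
          MN N * ‖x2 - x4‖ * (‖x1 - x2‖ ^ δ + ‖x3 - x4‖ ^ δ) := by
  intro s t hs hst htT N hN x1 x2 x3 x4 hx1 hx2 hx3 hx4
  have hsI : s ∈ Icc (0:ℝ) T := ⟨hs, (hst.trans_le htT).le⟩
  have htI : t ∈ Icc (0:ℝ) T := ⟨hs.trans hst.le, htT⟩
  set u : ℝ → EuclideanSpace ℝ (Fin d) := fun r => x3 + r • (x1 - x3) with hu_def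
  set v : ℝ → EuclideanSpace ℝ (Fin d) := fun r => x4 + r • (x2 - x4) with hv_def
  set ψ : ℝ → (EuclideanSpace ℝ (Fin m) →L[ℝ] EuclideanSpace ℝ (Fin d)) :=
    fun r => g s (u r) - g t (v r) with hψ_def
  -- derivative facts
  have hu : ∀ r : ℝ, HasDerivAt u (x1 - x3) r := by
    intro r
    simpa [hu_def] using ((hasDerivAt_id r).smul_const (x1 - x3)).const_add x3
  have hv : ∀ r : ℝ, HasDerivAt v (x2 - x4) r := by
    intro r
    simpa [hv_def] using ((hasDerivAt_id r).smul_const (x2 - x4)).const_add x4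
  have hψ : ∀ r : ℝ, HasDerivAt ψ (Dg s (u r) (x1 - x3) - Dg t (v r) (x2 - x4)) r := by
    intro r
    exact ((hDg s hsI (u r)).comp_hasDerivAt r (hu r)).sub
      ((hDg t htI (v r)).comp_hasDerivAt r (hv r))
  -- norm of Dg bounded by Lg
  have hDgLe : ∀ τ ∈ Icc (0:ℝ) T, ∀ x, ‖Dg τ x‖ ≤ Lg := by
    intro τ hτ x
    have lip : LipschitzWith (Real.toNNReal Lg) (g τ) := by
      apply LipschitzWith.of_dist_le_mul
      intro a b
      rw [dist_eq_norm, dist_eq_norm, Real.coe_toNNReal _ hLg.le]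
      exact H1i τ hτ a b
    simpa [Real.coe_toNNReal _ hLg.le] using (hDg τ hτ x).le_of_lipschitz lip
  -- bounds on u r, v r for r ∈ [0,1]
  have conv_norm : ∀ (a b : EuclideanSpace ℝ (Fin d)), ‖a‖ ≤ N → ‖b‖ ≤ N →
      ∀ r ∈ Icc (0:ℝ) 1, ‖a + r • (b - a)‖ ≤ N := by
    intro a b ha hb r hr
    have : a + r • (b - a) = (1 - r) • a + r • b := by module
    rw [this]
    calc ‖(1 - r) • a + r • b‖ ≤ ‖(1-r) • a‖ + ‖r • b‖ := norm_add_le _ _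
      _ = (1 - r) * ‖a‖ + r * ‖b‖ := by
          rw [norm_smul, norm_smul, Real.norm_eq_abs, Real.norm_eq_abs,
            abs_of_nonneg (by linarith [hr.2] : (0:ℝ) ≤ 1 - r), abs_of_nonneg hr.1]
      _ ≤ (1 - r) * N + r * N := by
          gcongr <;> [linarith [hr.2]; exact hr.1]
      _ = N := by ring
  set C : ℝ := Lg * ‖x1 - x2 - x3 + x4‖ + ‖x2 - x4‖ * h s t ^ β +
      MN N * ‖x2 - x4‖ * (‖x1 - x2‖ ^ δ + ‖x3 - x4‖ ^ δ) with hC_def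
  have bound : ∀ r ∈ Ico (0:ℝ) 1, ‖Dg s (u r) (x1 - x3) - Dg t (v r) (x2 - x4)‖ ≤ C := by
    intro r hr
    have hr' : r ∈ Icc (0:ℝ) 1 := ⟨hr.1, hr.2.le⟩
    have hunorm : ‖u r‖ ≤ N := conv_norm x3 x1 hx3 hx1 r hr'
    have hvnorm : ‖v r‖ ≤ N := conv_norm x4 x2 hx4 hx2 r hr'
    have key : Dg s (u r) (x1 - x3) - Dg t (v r) (x2 - x4) =
        Dg s (u r) (x1 - x2 - x3 + x4) + (Dg s (u r) - Dg t (v r)) (x2 - x4) := by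
      have e1 : x1 - x3 = (x1 - x2 - x3 + x4) + (x2 - x4) := by module
      rw [e1, map_add]
      simp [ContinuousLinearMap.sub_apply]
      abel
    rw [key]
    have b1 : ‖Dg s (u r) (x1 - x2 - x3 + x4)‖ ≤ Lg * ‖x1 - x2 - x3 + x4‖ := by
      calc ‖Dg s (u r) (x1 - x2 - x3 + x4)‖ ≤ ‖Dg s (u r)‖ * ‖x1 - x2 - x3 + x4‖ :=
            (Dg s (u r)).le_opNorm _
        _ ≤ Lg * ‖x1 - x2 - x3 + x4‖ := by gcongr; exact hDgLe s hsI (u r)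
    have b2a : ‖Dg s (u r) - Dg t (u r)‖ ≤ h s t ^ β := by
      have := H1iii s t hs hst htT (u r)
      have h2 : ‖Dg t (u r) - Dg s (u r)‖ ≤ h s t ^ β := le_trans (le_add_of_nonneg_left (norm_nonneg _)) this
      have e : Dg s (u r) - Dg t (u r) = -(Dg t (u r) - Dg s (u r)) := by abel
      have : ‖Dg s (u r) - Dg t (u r)‖ = ‖Dg t (u r) - Dg s (u r)‖ := by
        rw [e]; with_unfolding_all exact norm_neg (Dg t (u r) - Dg s (u r))
      rw [this]; exact h2
    have huv : ‖u r - v r‖ ^ δ ≤ ‖x1 - x2‖ ^ δ + ‖x3 - x4‖ ^ δ := by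
      have e2 : u r - v r = (1 - r) • (x3 - x4) + r • (x1 - x2) := by
        simp only [hu_def, hv_def]; module
      have hle : ‖u r - v r‖ ≤ max ‖x1 - x2‖ ‖x3 - x4‖ := by
        rw [e2]
        calc ‖(1 - r) • (x3 - x4) + r • (x1 - x2)‖
            ≤ (1 - r) * ‖x3 - x4‖ + r * ‖x1 - x2‖ := by
              refine (norm_add_le _ _).trans ?_
              rw [norm_smul, norm_smul, Real.norm_eq_abs, Real.norm_eq_abs,
                abs_of_nonneg (by linarith [hr'.2] : (0:ℝ) ≤ 1 - r), abs_of_nonneg hr'.1]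
          _ ≤ (1 - r) * max ‖x1 - x2‖ ‖x3 - x4‖ + r * max ‖x1 - x2‖ ‖x3 - x4‖ := by
              gcongr <;> first
                | exact le_max_right _ _ | exact le_max_left _ _
                | linarith [hr'.2] | exact hr'.1
          _ = max ‖x1 - x2‖ ‖x3 - x4‖ := by ring
      calc ‖u r - v r‖ ^ δ ≤ (max ‖x1 - x2‖ ‖x3 - x4‖) ^ δ :=
            Real.rpow_le_rpow (norm_nonneg _) hle hδ0.le
        _ ≤ ‖x1 - x2‖ ^ δ + ‖x3 - x4‖ ^ δ := by
            rcases max_cases ‖x1 - x2‖ ‖x3 - x4‖ with ⟨hm, _⟩ | ⟨hm, _⟩ <;> rw [hm]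
            · exact le_add_of_nonneg_right (Real.rpow_nonneg (norm_nonneg _) _)
            · exact le_add_of_nonneg_left (Real.rpow_nonneg (norm_nonneg _) _)
    have b2b : ‖Dg t (u r) - Dg t (v r)‖ ≤ MN N * (‖x1 - x2‖ ^ δ + ‖x3 - x4‖ ^ δ) := by
      calc ‖Dg t (u r) - Dg t (v r)‖ ≤ MN N * ‖u r - v r‖ ^ δ :=
            H1ii N hN t htI (u r) (v r) hunorm hvnorm
        _ ≤ MN N * (‖x1 - x2‖ ^ δ + ‖x3 - x4‖ ^ δ) :=
            mul_le_mul_of_nonneg_left huv (hMN N hN).le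
    have b2 : ‖(Dg s (u r) - Dg t (v r)) (x2 - x4)‖ ≤
        (h s t ^ β + MN N * (‖x1 - x2‖ ^ δ + ‖x3 - x4‖ ^ δ)) * ‖x2 - x4‖ := by
      calc ‖(Dg s (u r) - Dg t (v r)) (x2 - x4)‖
          ≤ ‖Dg s (u r) - Dg t (v r)‖ * ‖x2 - x4‖ := (Dg s (u r) - Dg t (v r)).le_opNorm _
        _ ≤ (‖Dg s (u r) - Dg t (u r)‖ + ‖Dg t (u r) - Dg t (v r)‖) * ‖x2 - x4‖ := by
            refine mul_le_mul_of_nonneg_right ?_ (norm_nonneg _)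
            have e : Dg s (u r) - Dg t (v r) =
                (Dg s (u r) - Dg t (u r)) + (Dg t (u r) - Dg t (v r)) := by abel
            rw [e]; with_unfolding_all exact norm_add_le (Dg s (u r) - Dg t (u r)) (Dg t (u r) - Dg t (v r))
        _ ≤ (h s t ^ β + MN N * (‖x1 - x2‖ ^ δ + ‖x3 - x4‖ ^ δ)) * ‖x2 - x4‖ :=
            mul_le_mul_of_nonneg_right (add_le_add b2a b2b) (norm_nonneg _)
      -- done
    calc ‖Dg s (u r) (x1 - x2 - x3 + x4) + (Dg s (u r) - Dg t (v r)) (x2 - x4)‖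
        ≤ ‖Dg s (u r) (x1 - x2 - x3 + x4)‖ + ‖(Dg s (u r) - Dg t (v r)) (x2 - x4)‖ :=
          by with_unfolding_all exact norm_add_le _ _
      _ ≤ Lg * ‖x1 - x2 - x3 + x4‖ +
            (h s t ^ β + MN N * (‖x1 - x2‖ ^ δ + ‖x3 - x4‖ ^ δ)) * ‖x2 - x4‖ :=
          add_le_add b1 b2
      _ = C := by rw [hC_def]; ring
  have mv : ‖ψ 1 - ψ 0‖ ≤ C :=
    norm_image_sub_le_of_norm_deriv_le_segment_01'
      (fun r _ => (hψ r).hasDerivWithinAt) bound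
  have e3 : ψ 1 - ψ 0 = g s x1 - g s x3 - g t x2 + g t x4 := by
    simp only [hψ_def, hu_def, hv_def, one_smul, zero_smul, add_zero,
      add_sub_cancel]
    abel
  rwa [e3] at mv
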